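/- arXiv:math/0204058 — 2 statements merged into one kernel-verified Lean document; each statement's English description precedes it below -/
import Mathlib

section
/- Define on G = ℤ × ℤ the operation (x₁, x₂) ⋆ (y₁, y₂) = (z₁, z₂) where z₁ = x₁ + y₁ and z₂ is determined by 2z₁ + z₂ = (2x₁ + x₂) + (2y₁ + y₂), i.e., z₂ = x₂ + y₂. More interestingly, on a 2-step nilpotent group N with lower central series N ⊇ N², define on N × N² the operation (x₁,x₂) ⋆ (y₁,y₂) = (z₁,z₂) by z₁ = x₁y₁ and z₁²z₂ = x₁²x₂y₁²y₂. Then this operation makes N × N² into a group. -/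
/-- The Leibman product on `N × N²`: `(x₁,x₂) ⋆ (y₁,y₂) = (z₁,z₂)` where
`z₁ = x₁y₁` and `z₁²z₂ = x₁²x₂y₁²y₂`. -/
def leib {N : Type*} [Group N] (p q : N × N) : N × N :=
  (p.1 * q.1, (p.1 * q.1)⁻¹ * (p.1 * q.1)⁻¹ * (p.1 ^ 2 * p.2 * (q.1 ^ 2 * q.2)))

open scoped commutatorElement

theorem stmt_12 {N : Type*} [Group N]
    (h2 : ∀ a b : N, ⁅a, b⁆ ∈ Subgroup.center N) :
    -- the toy example on ℤ × ℤ: z₂ = x₂ + y₂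
    (∀ x₁ x₂ y₁ y₂ : ℤ, 2 * (x₁ + y₁) + (x₂ + y₂) = (2 * x₁ + x₂) + (2 * y₁ + y₂)) ∧
    -- closure: the second coordinate stays in N² = [N,N]
    (∀ p q : N × N, p.2 ∈ commutator N → q.2 ∈ commutator N →
      (leib p q).2 ∈ commutator N) ∧
    -- associativity
    (∀ p q r : N × N, leib (leib p q) r = leib p (leib q r)) ∧
    -- identity
    (∀ p : N × N, leib ((1 : N), (1 : N)) p = p ∧ leib p ((1 : N), (1 : N)) = p) ∧
    -- inverses
    (∀ p : N × N, p.2 ∈ commutator N → ∃ q : N × N, q.2 ∈ commutator N ∧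
      leib p q = ((1 : N), (1 : N)) ∧ leib q p = ((1 : N), (1 : N))) := by
  have hle : commutator N ≤ Subgroup.center N := by
    rw [commutator_def]
    exact Subgroup.commutator_le.mpr fun g _ h _ => h2 g h
  have hnorm : (commutator N).Normal := inferInstance
  refine ⟨by intro x₁ x₂ y₁ y₂; ring, ?_, ?_, ?_, ?_⟩
  · rintro ⟨x, a⟩ ⟨y, b⟩ ha hb
    have key : (leib (x, a) (y, b)).2 =
        (y⁻¹ * ⁅x⁻¹, y⁻¹⁆ * y) * ((y ^ 2)⁻¹ * a * y ^ 2) * b := by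
      simp only [leib, commutatorElement_def]
      group
    rw [key]
    exact mul_mem (mul_mem (hnorm.conj_mem' _ (by rw [commutator_def]; exact Subgroup.commutator_mem_commutator (Subgroup.mem_top _) (Subgroup.mem_top _)) y) (hnorm.conj_mem' a ha (y ^ 2))) hb
  · rintro ⟨x, a⟩ ⟨y, b⟩ ⟨z, c⟩
    simp only [leib, Prod.mk.injEq, pow_two]
    constructor
    · group
    · group
  · rintro ⟨x, a⟩
    constructor <;> (simp only [leib, Prod.mk.injEq]; constructor <;> group)
  · rintro ⟨x, a⟩ ha
    have hc : ∀ g : N, g * a = a * g := fun g =>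
      (Subgroup.mem_center_iff.mp (hle ha) g)
    have hcinv : ∀ g : N, g * a⁻¹ = a⁻¹ * g := fun g => by
      simpa using (congrArg (·⁻¹) (hc g⁻¹)).symm
    refine ⟨(x⁻¹, a⁻¹), inv_mem ha, ?_, ?_⟩
    · simp only [leib, Prod.mk.injEq, mul_inv_cancel, inv_one, one_mul, pow_two]
      refine ⟨trivial, ?_⟩
      rw [mul_assoc (x*x) a, ← mul_assoc a, ← hc]
      group
    · simp only [leib, Prod.mk.injEq, inv_mul_cancel, inv_one, one_mul, pow_two]
      refine ⟨trivial, ?_⟩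
      rw [mul_assoc (x⁻¹*x⁻¹) a⁻¹, ← mul_assoc a⁻¹, ← hcinv]
      group
end

section
/- Let N be a nilpotent group of class at most 2 with N² central, a, x ∈ N. Define S on N × N² (with the Leibman product ⋆) by S(y₁, y₂) = (a[a,x], e) ⋆ (y₁, y₂), and let I(y₁,y₂) = (xy₁Γ, xy₁²y₂Γ, xy₁³y₂³Γ) for a subgroup Γ ≤ N. Then I(S(y₁,y₂)) = (axy₁Γ, a²xy₁²y₂Γ, a³xy₁³y₂³Γ); that is, I intertwines S with the diagonal-type action (zΓ, wΓ, uΓ) ↦ (azΓ, a²wΓ, a³uΓ). -/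
/-- The map `I(y₁,y₂) = (xy₁Γ, xy₁²y₂Γ, xy₁³y₂³Γ)`. -/
def Imap {N : Type*} [Group N] (Γ : Subgroup N) (x : N) (p : N × N) :
    (N ⧸ Γ) × (N ⧸ Γ) × (N ⧸ Γ) :=
  (↑(x * p.1), ↑(x * p.1 ^ 2 * p.2), ↑(x * p.1 ^ 3 * p.2 ^ 3))

/-- In a class-2 situation, `(gh)³ c³ = g³ h³` where `c = [g⁻¹,h⁻¹] = g⁻¹h⁻¹gh` is central. -/
lemma cube_aux {N : Type*} [Group N] (g h c : N) (hc : c = g⁻¹ * h⁻¹ * g * h)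
    (hg : c * g = g * c) (hh : c * h = h * c) : (g * h) ^ 3 * c ^ 3 = g ^ 3 * h ^ 3 := by
  have hswap : ∀ y, h * (g * y) = g * (h * (c⁻¹ * y)) := by
    intro y
    have : h * g = g * (h * c⁻¹) := by rw [hc]; group
    rw [← mul_assoc, this, mul_assoc, mul_assoc]
  have hg' : c⁻¹ * g = g * c⁻¹ := (Commute.inv_left (show Commute c g from hg)).eq
  have hh' : c⁻¹ * h = h * c⁻¹ := (Commute.inv_left (show Commute c h from hh)).eq
  have hmg : ∀ y, c⁻¹ * (g * y) = g * (c⁻¹ * y) := by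
    intro y; rw [← mul_assoc, hg', mul_assoc]
  have hmh : ∀ y, c⁻¹ * (h * y) = h * (c⁻¹ * y) := by
    intro y; rw [← mul_assoc, hh', mul_assoc]
  simp only [pow_succ, pow_zero, one_mul, mul_assoc, hswap, hmg, hmh, inv_mul_cancel_left,
    inv_mul_cancel, mul_one]

open scoped commutatorElement

/-- `I` intertwines `S(y) = (a[a,x], e) ⋆ y` with
`(zΓ, wΓ, uΓ) ↦ (azΓ, a²wΓ, a³uΓ)`, where `[a,x] = a⁻¹x⁻¹ax`. -/
theorem stmt_15 {N : Type*} [Group N]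
    (h2 : ∀ g h : N, ⁅g, h⁆ ∈ Subgroup.center N)
    (Γ : Subgroup N) (a x : N) (p : N × N) (hp2 : p.2 ∈ commutator N) :
    Imap Γ x (leib (a * (a⁻¹ * x⁻¹ * a * x), (1 : N)) p) =
      (↑(a * x * p.1), ↑(a ^ 2 * x * p.1 ^ 2 * p.2), ↑(a ^ 3 * x * p.1 ^ 3 * p.2 ^ 3)) := by
  obtain ⟨p1, p2⟩ := p
  simp only at hp2
  have hc2 : ∀ y : N, p2 * y = y * p2 := by
    have hle : commutator N ≤ Subgroup.center N := by
      rw [commutator_def, Subgroup.commutator_le]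
      intro u _ v _; exact h2 u v
    intro y; exact ((Subgroup.mem_center_iff.mp (hle hp2)) y).symm
  set g : N := x⁻¹ * a * x with hgdef
  set c : N := g⁻¹ * p1⁻¹ * g * p1 with hcdef
  have hcc : ∀ y : N, y * c = c * y := Subgroup.mem_center_iff.mp (by
    have := h2 g⁻¹ p1⁻¹
    simpa [commutatorElement_def, hcdef, mul_assoc] using this)
  have hA : a * (a⁻¹ * x⁻¹ * a * x) = g := by rw [hgdef]; group
  have key3 : x * (g * p1) ^ 3 * ((g * p1)⁻¹ * (g * p1)⁻¹ * (g ^ 2 * 1 * (p1 ^ 2 * p2))) ^ 3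
      = a ^ 3 * x * p1 ^ 3 * p2 ^ 3 := by
    have hz : (g * p1)⁻¹ * (g * p1)⁻¹ * (g ^ 2 * 1 * (p1 ^ 2 * p2)) = c * p2 := by
      have h1 : (g * p1)⁻¹ * (g * p1)⁻¹ * (g ^ 2 * 1 * (p1 ^ 2 * p2))
          = p1⁻¹ * (c * p1) * p2 := by
        rw [hcdef]; simp only [pow_succ, pow_zero, one_mul]; group
      rw [h1, ← hcc p1]; group
    rw [hz]
    have hcp : Commute c p2 := (hc2 c).symm
    rw [hcp.mul_pow]
    have hcube := cube_aux g p1 c hcdef (hcc g).symm (hcc p1).symm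
    calc x * (g * p1) ^ 3 * (c ^ 3 * p2 ^ 3)
        = x * ((g * p1) ^ 3 * c ^ 3) * p2 ^ 3 := by group
      _ = x * (g ^ 3 * p1 ^ 3) * p2 ^ 3 := by rw [hcube]
      _ = a ^ 3 * x * p1 ^ 3 * p2 ^ 3 := by
        rw [hgdef]; simp only [pow_succ, pow_zero, one_mul]; group
  refine Prod.ext ?_ (Prod.ext ?_ ?_) <;> simp only [Imap, leib, hA]
  · exact congrArg _ (by rw [hgdef]; group)
  · exact congrArg _ (by rw [hgdef]; simp only [pow_succ, pow_zero, one_mul]; group)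
  · exact congrArg _ key3
end
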